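/- arXiv:1503.06308 — 4 statements merged into one kernel-verified Lean document; each statement's English description precedes it below -/
import Mathlib

section
/- Let 𝓛 be an n×n Lefkovitch matrix with first row f_1,...,f_n, subdiagonal entries b_1,...,b_{n-1} > 0, and diagonal entries 0, c_1, ..., c_{n-1} (in rows 2 through n), and zeros elsewhere. Define S to be the upper unitriangular matrix with entries s_{i,j} = Γ_i^{j-i} / Λ_i^{j-1} for j ≥ i, and define L to be the pseudo-Leslie matrix with first row φ_j = -Γ_1^j / Λ_1^{j-1} + Σ_{k=1}^{j} (Γ_k^{j-k} / Λ_k^{j-1}) f_k, subdiagonal entries b_1,...,b_{n-1}, and zeros elsewhere. Then S is invertible and S⁻¹ 𝓛 S = L. -/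
open Finset Matrix

/-- `Γ_i^p`: signed sums of products of the retention coefficients. -/
def Gam (n : ℕ) (c : ℕ → ℝ) (i p : ℕ) : ℝ :=
  (-1 : ℝ) ^ p * ∑ s ∈ Finset.powersetCard p (Finset.Icc i (n - 1)), ∏ k ∈ s, c k

/-- `Λ_i^j = b_i ⋯ b_j` (equal to `1` when `j = i - 1`, the empty product). -/
def Lam (b : ℕ → ℝ) (i j : ℕ) : ℝ := ∏ k ∈ Finset.Icc i j, b k

/-- The Lefkovitch (Usher) matrix with fertilities `f`, transition rates `b` and
retention rates `c` (all in 1-based indexing). -/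
def Lef (n : ℕ) (f c b : ℕ → ℝ) : Matrix (Fin n) (Fin n) ℝ := fun i j =>
  if i.val = 0 then f (j.val + 1)
  else if i.val = j.val + 1 then b i.val
  else if i = j then c i.val
  else 0

/-- The upper unitriangular similarity matrix `S`, with
`s_{i,j} = Γ_i^{j-i} / Λ_i^{j-1}` for `j ≥ i` (1-based). -/
noncomputable def Smat (n : ℕ) (c b : ℕ → ℝ) : Matrix (Fin n) (Fin n) ℝ := fun i j =>
  if i ≤ j then Gam n c (i.val + 1) (j.val - i.val) / Lam b (i.val + 1) j.val else 0

/-- The first-row coefficients of the pseudo-Leslie matrix: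
`φ_j = -Γ_1^j/Λ_1^{j-1} + ∑_{k=1}^{j} (Γ_k^{j-k}/Λ_k^{j-1}) f_k`. -/
noncomputable def phi (n : ℕ) (f c b : ℕ → ℝ) (j : ℕ) : ℝ :=
  -(Gam n c 1 j / Lam b 1 (j - 1)) +
    ∑ k ∈ Finset.Icc 1 j, Gam n c k (j - k) / Lam b k (j - 1) * f k

/-- A pseudo-Leslie matrix: first row `φ`, subdiagonal `b`, zeros elsewhere. -/
def PLes (n : ℕ) (φ b : ℕ → ℝ) : Matrix (Fin n) (Fin n) ℝ := fun i j =>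
  if i.val = 0 then φ (j.val + 1)
  else if i.val = j.val + 1 then b i.val
  else 0

/-! ### Auxiliary nat-indexed entries -/

/-- nat-indexed entry of `Lef`. -/
def lefE (f c b : ℕ → ℝ) (a m : ℕ) : ℝ :=
  if a = 0 then f (m + 1) else if a = m + 1 then b a else if a = m then c a else 0

/-- nat-indexed entry of `PLes`. -/
noncomputable def pE (n : ℕ) (f c b : ℕ → ℝ) (a d : ℕ) : ℝ :=
  if a = 0 then phi n f c b (d + 1) else if a = d + 1 then b a else 0

/-- nat-indexed entry of `Smat`. -/
noncomputable def sE (n : ℕ) (c b : ℕ → ℝ) (a d : ℕ) : ℝ :=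
  if a ≤ d then Gam n c (a + 1) (d - a) / Lam b (a + 1) d else 0

section aux

variable {n : ℕ} {f c b : ℕ → ℝ}

lemma gam_zero (i : ℕ) : Gam n c i 0 = 1 := by
  simp [Gam]

lemma gam_large (hn : 1 ≤ n) {i p : ℕ} (h : n - i < p) : Gam n c i p = 0 := by
  have hc : (Finset.Icc i (n - 1)).card < p := by
    rw [Nat.card_Icc]; omega
  rw [Gam, Finset.powersetCard_eq_empty.2 hc]
  simp

lemma gam_rec (hn : 1 ≤ n) {i : ℕ} (hi : i ≤ n - 1) (p : ℕ) :
    Gam n c i (p + 1) = Gam n c (i + 1) (p + 1) - c i * Gam n c (i + 1) p := by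
  have hins : Finset.Icc i (n - 1) = insert i (Finset.Icc (i + 1) (n - 1)) := by
    ext x; simp only [Finset.mem_Icc, Finset.mem_insert]; omega
  have hni : i ∉ Finset.Icc (i + 1) (n - 1) := by simp
  have hdisj : Disjoint ((Finset.Icc (i + 1) (n - 1)).powersetCard (p + 1))
      (((Finset.Icc (i + 1) (n - 1)).powersetCard p).image (insert i)) := by
    rw [Finset.disjoint_left]
    rintro t ht hti
    rw [Finset.mem_powersetCard] at ht
    obtain ⟨u, hu, rfl⟩ := Finset.mem_image.1 hti
    exact hni (ht.1 (Finset.mem_insert_self i u))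
  have hinj : ∀ x ∈ (Finset.Icc (i + 1) (n - 1)).powersetCard p,
      ∀ y ∈ (Finset.Icc (i + 1) (n - 1)).powersetCard p, insert i x = insert i y → x = y := by
    intro x hx y hy hxy
    rw [Finset.mem_powersetCard] at hx hy
    have hix : i ∉ x := fun h => hni (hx.1 h)
    have hiy : i ∉ y := fun h => hni (hy.1 h)
    have := congrArg (fun s => Finset.erase s i) hxy
    simpa [Finset.erase_insert hix, Finset.erase_insert hiy] using this
  have himg : ∑ u ∈ ((Finset.Icc (i + 1) (n - 1)).powersetCard p).image (insert i),
      ∏ k ∈ u, c k = ∑ u ∈ (Finset.Icc (i + 1) (n - 1)).powersetCard p, c i * ∏ k ∈ u, c k := by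
    rw [Finset.sum_image hinj]
    refine Finset.sum_congr rfl fun u hu => ?_
    rw [Finset.mem_powersetCard] at hu
    rw [Finset.prod_insert fun h => hni (hu.1 h)]
  rw [Gam, hins, Finset.powersetCard_succ_insert hni, Finset.sum_union hdisj, himg,
    ← Finset.mul_sum]
  rw [Gam, Gam]
  ring

lemma lam_low {i j : ℕ} (h : i ≤ j) : Lam b i j = b i * Lam b (i + 1) j := by
  have hins : Finset.Icc i j = insert i (Finset.Icc (i + 1) j) := by
    ext x; simp only [Finset.mem_Icc, Finset.mem_insert]; omega
  rw [Lam, Lam, hins, Finset.prod_insert (by simp)]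

lemma lam_high {i j : ℕ} (h : i ≤ j + 1) : Lam b i (j + 1) = Lam b i j * b (j + 1) :=
  Finset.prod_Icc_succ_top h _

lemma lam_ne (hb : ∀ k, 1 ≤ k → k ≤ n - 1 → 0 < b k) {i j : ℕ} (hi : 1 ≤ i)
    (hj : j ≤ n - 1) : Lam b i j ≠ 0 := by
  rw [Lam]
  refine Finset.prod_ne_zero_iff.2 fun k hk => ?_
  rw [Finset.mem_Icc] at hk
  exact ne_of_gt (hb k (le_trans hi hk.1) (le_trans hk.2 hj))

lemma lam_empty (i : ℕ) : Lam b (i + 1) i = 1 := by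
  rw [Lam, Finset.Icc_eq_empty (by omega), Finset.prod_empty]

lemma sE_diag (m : ℕ) : sE n c b m m = 1 := by
  simp [sE, gam_zero, lam_empty]

lemma sE_of_gt {a d : ℕ} (h : d < a) : sE n c b a d = 0 := by
  simp [sE, Nat.not_le.2 h]

lemma sE_of_le {a d : ℕ} (h : a ≤ d) :
    sE n c b a d = Gam n c (a + 1) (d - a) / Lam b (a + 1) d := if_pos h

lemma pE_zero (d : ℕ) : pE n f c b 0 d = phi n f c b (d + 1) := if_pos rfl

lemma pE_sub (d : ℕ) : pE n f c b (d + 1) d = b (d + 1) := by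
  unfold pE
  rw [if_neg (by omega), if_pos rfl]

lemma lef_eq (i k : Fin n) : Lef n f c b i k = lefE f c b i.val k.val := by
  unfold Lef lefE
  by_cases h0 : i.val = 0
  · rw [if_pos h0, if_pos h0]
  · rw [if_neg h0, if_neg h0]
    by_cases h1 : i.val = k.val + 1
    · rw [if_pos h1, if_pos h1]
    · rw [if_neg h1, if_neg h1]
      by_cases h2 : i = k
      · rw [if_pos h2, if_pos (congrArg Fin.val h2)]
      · rw [if_neg h2, if_neg (fun hv => h2 (Fin.ext hv))]

lemma smat_eq (i k : Fin n) : Smat n c b i k = sE n c b i.val k.val := by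
  unfold Smat sE
  by_cases h : i ≤ k
  · rw [if_pos h, if_pos (Fin.le_def.1 h)]
  · rw [if_neg h, if_neg (fun hv => h (Fin.le_def.2 hv))]

lemma ples_eq (i k : Fin n) : PLes n (phi n f c b) b i k = pE n f c b i.val k.val := rfl

/-- The key scalar identity for rows `a ≥ 1`. -/
lemma key_row (hn : 1 ≤ n) (hb : ∀ k, 1 ≤ k → k ≤ n - 1 → 0 < b k)
    {a d : ℕ} (ha1 : 1 ≤ a) (ha : a < n) (hd : d < n) :
    b a * sE n c b (a - 1) d + c a * sE n c b a d =
      if d + 1 < n then sE n c b a (d + 1) * b (d + 1) else 0 := by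
  rcases lt_trichotomy d (a - 1) with hlt | heq | hgt
  · -- all zero
    rw [sE_of_gt hlt, sE_of_gt (by omega), sE_of_gt (by omega)]
    simp
  · -- d = a - 1, subdiagonal case
    subst heq
    have hda : a = (a - 1) + 1 := by omega
    rw [sE_diag, sE_of_gt (by omega)]
    rw [if_pos (by omega)]
    rw [← hda, sE_diag]
    ring
  · -- main case : a ≤ d
    have had : a ≤ d := by omega
    have hdn1 : d ≤ n - 1 := by omega
    have hba : b a ≠ 0 := ne_of_gt (hb a ha1 (by omega))
    have hΛ : Lam b (a + 1) d ≠ 0 := lam_ne hb (by omega) hdn1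
    have h1 : sE n c b (a - 1) d = Gam n c a (d - a + 1) / (b a * Lam b (a + 1) d) := by
      rw [sE_of_le (by omega)]
      have e1 : a - 1 + 1 = a := by omega
      have e2 : d - (a - 1) = d - a + 1 := by omega
      rw [e1, e2, lam_low had]
    have h2 : sE n c b a d = Gam n c (a + 1) (d - a) / Lam b (a + 1) d :=
      sE_of_le had
    have hrec : Gam n c a (d - a + 1) =
        Gam n c (a + 1) (d - a + 1) - c a * Gam n c (a + 1) (d - a) :=
      gam_rec hn (by omega) _
    rw [h1, h2, hrec]
    by_cases hd1 : d + 1 < n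
    · rw [if_pos hd1, sE_of_le (by omega)]
      have e3 : d + 1 - a = d - a + 1 := by omega
      have hb1 : b (d + 1) ≠ 0 := ne_of_gt (hb (d + 1) (by omega) (by omega))
      rw [e3, lam_high (by omega)]
      field_simp
      ring
    · rw [if_neg hd1]
      have hzero : Gam n c (a + 1) (d - a + 1) = 0 := gam_large hn (by omega)
      rw [hzero]
      field_simp
      ring

/-- The key scalar identity for row `0`. -/
lemma key_row0 (hn : 1 ≤ n) (hb : ∀ k, 1 ≤ k → k ≤ n - 1 → 0 < b k)
    {d : ℕ} (hd : d < n) :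
    ∑ m ∈ Finset.range n, f (m + 1) * sE n c b m d =
      phi n f c b (d + 1) + (if d + 1 < n then sE n c b 0 (d + 1) * b (d + 1) else 0) := by
  have hsum : ∑ m ∈ Finset.range n, f (m + 1) * sE n c b m d =
      ∑ m ∈ Finset.range (d + 1), f (m + 1) * (Gam n c (m + 1) (d - m) / Lam b (m + 1) d) := by
    have hss := Finset.sum_subset (f := fun m => f (m + 1) * sE n c b m d)
      (Finset.range_subset_range.2 (by omega : d + 1 ≤ n))
      (fun m _ hm => by
        rw [Finset.mem_range, not_lt] at hm
        show f (m + 1) * sE n c b m d = 0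
        rw [sE_of_gt (by omega), mul_zero])
    rw [← hss]
    refine Finset.sum_congr rfl fun m hm => ?_
    rw [Finset.mem_range] at hm
    show f (m + 1) * sE n c b m d = f (m + 1) * (Gam n c (m + 1) (d - m) / Lam b (m + 1) d)
    rw [sE_of_le (by omega)]
  have hphi : ∑ k ∈ Finset.Icc 1 (d + 1), Gam n c k (d + 1 - k) / Lam b k (d + 1 - 1) * f k =
      ∑ m ∈ Finset.range (d + 1), f (m + 1) * (Gam n c (m + 1) (d - m) / Lam b (m + 1) d) := by
    refine Finset.sum_nbij' (fun k => k - 1) (fun m => m + 1) ?_ ?_ ?_ ?_ ?_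
    · intro k hk; rw [Finset.mem_Icc] at hk
      show k - 1 ∈ Finset.range (d + 1); rw [Finset.mem_range]; omega
    · intro m hm; rw [Finset.mem_range] at hm
      show m + 1 ∈ Finset.Icc 1 (d + 1); rw [Finset.mem_Icc]; omega
    · intro k hk; rw [Finset.mem_Icc] at hk
      show k - 1 + 1 = k; omega
    · intro m _; show m + 1 - 1 = m; omega
    · intro k hk
      rw [Finset.mem_Icc] at hk
      show Gam n c k (d + 1 - k) / Lam b k (d + 1 - 1) * f k =
        f (k - 1 + 1) * (Gam n c (k - 1 + 1) (d - (k - 1)) / Lam b (k - 1 + 1) d)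
      have e1 : k - 1 + 1 = k := by omega
      have e2 : d + 1 - k = d - (k - 1) := by omega
      have e3 : d + 1 - 1 = d := by omega
      rw [e1, e2, e3]
      ring
  rw [hsum, phi, hphi]
  have hlast : (if d + 1 < n then sE n c b 0 (d + 1) * b (d + 1) else 0) =
      Gam n c 1 (d + 1) / Lam b 1 (d + 1 - 1) := by
    by_cases hd1 : d + 1 < n
    · rw [if_pos hd1, sE_of_le (by omega)]
      have hb1 : b (d + 1) ≠ 0 := ne_of_gt (hb (d + 1) (by omega) (by omega))
      have e3 : d + 1 - 1 = d := by omega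
      rw [e3, show (0:ℕ) + 1 = 1 from rfl, Nat.sub_zero, lam_high (by omega)]
      rw [div_mul_eq_mul_div, mul_div_mul_right _ _ hb1]
    · rw [if_neg hd1]
      have hzero : Gam n c 1 (d + 1) = 0 := gam_large hn (by omega)
      rw [hzero, zero_div]
  rw [hlast]
  ring

end aux

theorem similarity_lefkovitch_pseudoLeslie (n : ℕ) (hn : 1 ≤ n)
    (f c b : ℕ → ℝ) (hb : ∀ k, 1 ≤ k → k ≤ n - 1 → 0 < b k) :
    IsUnit (Smat n c b) ∧
      (Smat n c b)⁻¹ * Lef n f c b * Smat n c b = PLes n (phi n f c b) b := by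
  -- S has determinant 1
  have hdet : (Smat n c b).det = 1 := by
    rw [Matrix.det_of_upperTriangular (M := Smat n c b) (fun i j hij => by
      rw [smat_eq]
      exact sE_of_gt hij)]
    refine Finset.prod_eq_one fun i _ => ?_
    rw [smat_eq, sE_diag]
  have hunit : IsUnit (Smat n c b) := by
    rw [Matrix.isUnit_iff_isUnit_det, hdet]
    exact isUnit_one
  refine ⟨hunit, ?_⟩
  -- the key intertwining identity
  have hkey : Lef n f c b * Smat n c b = Smat n c b * PLes n (phi n f c b) b := by
    ext i j
    rw [Matrix.mul_apply, Matrix.mul_apply]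
    have hL : ∑ k : Fin n, Lef n f c b i k * Smat n c b k j =
        ∑ m ∈ Finset.range n, lefE f c b i.val m * sE n c b m j.val := by
      rw [← Fin.sum_univ_eq_sum_range (fun m => lefE f c b i.val m * sE n c b m j.val) n]
      exact Finset.sum_congr rfl fun k _ => by rw [lef_eq, smat_eq]
    have hR : ∑ k : Fin n, Smat n c b i k * PLes n (phi n f c b) b k j =
        ∑ m ∈ Finset.range n, sE n c b i.val m * pE n f c b m j.val := by
      rw [← Fin.sum_univ_eq_sum_range (fun m => sE n c b i.val m * pE n f c b m j.val) n]
      exact Finset.sum_congr rfl fun k _ => by rw [smat_eq, ples_eq]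
    rw [hL, hR]
    set a := i.val with haeq
    set d := j.val with hdeq
    have ha : a < n := i.isLt
    have hd : d < n := j.isLt
    -- compute the RHS sum
    have hRHS : ∑ m ∈ Finset.range n, sE n c b a m * pE n f c b m d =
        sE n c b a 0 * phi n f c b (d + 1) +
          (if d + 1 < n then sE n c b a (d + 1) * b (d + 1) else 0) := by
      by_cases hd1 : d + 1 < n
      · rw [if_pos hd1]
        have hsub : ({0, d + 1} : Finset ℕ) ⊆ Finset.range n := by
          intro x hx
          simp only [Finset.mem_insert, Finset.mem_singleton] at hx
          rw [Finset.mem_range]; omega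
        rw [← Finset.sum_subset hsub (fun m hm hm' => by
          simp only [Finset.mem_insert, Finset.mem_singleton, not_or] at hm'
          rw [pE, if_neg hm'.1, if_neg (by omega), mul_zero])]
        rw [Finset.sum_pair (by omega), pE_zero, pE_sub]
      · rw [if_neg hd1]
        rw [Finset.sum_eq_single_of_mem 0 (Finset.mem_range.2 (by omega)) (fun m hm hm' => by
          rw [Finset.mem_range] at hm
          rw [pE, if_neg hm', if_neg (by omega), mul_zero])]
        rw [pE, if_pos rfl, add_zero]
    rw [hRHS]
    by_cases ha0 : a = 0
    · -- first row
      rw [ha0]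
      have hLHS : ∑ m ∈ Finset.range n, lefE f c b 0 m * sE n c b m d =
          ∑ m ∈ Finset.range n, f (m + 1) * sE n c b m d :=
        Finset.sum_congr rfl fun m _ => by rw [lefE, if_pos rfl]
      rw [hLHS, sE_diag, one_mul]
      exact key_row0 hn hb hd
    · -- rows below the first
      have ha1 : 1 ≤ a := by omega
      have hLHS : ∑ m ∈ Finset.range n, lefE f c b a m * sE n c b m d =
          b a * sE n c b (a - 1) d + c a * sE n c b a d := by
        have hsub : ({a - 1, a} : Finset ℕ) ⊆ Finset.range n := by
          intro x hx
          simp only [Finset.mem_insert, Finset.mem_singleton] at hx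
          rw [Finset.mem_range]; omega
        rw [← Finset.sum_subset hsub (fun m hm hm' => by
          simp only [Finset.mem_insert, Finset.mem_singleton, not_or] at hm'
          show lefE f c b a m * sE n c b m d = 0
          unfold lefE
          rw [if_neg ha0, if_neg (by omega), if_neg (fun h => hm'.2 h.symm), zero_mul])]
        rw [Finset.sum_pair (by omega)]
        congr 1
        · unfold lefE
          rw [if_neg ha0, if_pos (by omega)]
        · unfold lefE
          rw [if_neg ha0, if_neg (by omega), if_pos rfl]
      rw [hLHS, show sE n c b a 0 = 0 from sE_of_gt (by omega), zero_mul, zero_add]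
      exact key_row hn hb ha1 ha hd
  -- conclude
  have hdet' : IsUnit (Smat n c b).det := by rw [hdet]; exact isUnit_one
  calc (Smat n c b)⁻¹ * Lef n f c b * Smat n c b
      = (Smat n c b)⁻¹ * (Lef n f c b * Smat n c b) := by rw [Matrix.mul_assoc]
    _ = (Smat n c b)⁻¹ * (Smat n c b * PLes n (phi n f c b) b) := by rw [hkey]
    _ = (Smat n c b)⁻¹ * Smat n c b * PLes n (phi n f c b) b := by rw [Matrix.mul_assoc]
    _ = PLes n (phi n f c b) b := by rw [Matrix.nonsing_inv_mul _ hdet', Matrix.one_mul]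
end

section
/- Under the hypotheses that 𝓛S = SL with S invertible, λ ≠ 0 a common eigenvalue, u a right eigenvector of L with nonzero entries, w = Su a right eigenvector of 𝓛 with nonzero entries, U = diag(u), W = diag(w), and P^L = (1/λ)U⁻¹LU, P^𝓛 = (1/λ)W⁻¹𝓛W: if π^𝓛 is a row vector with π^𝓛 P^𝓛 = π^𝓛, then π^L := π^𝓛 W⁻¹SU satisfies π^L P^L = π^L. -/
open Matrix

/-- Transformation rule for stationary distributions: if `π^𝓛 P^𝓛 = π^𝓛`, then
`π^L = π^𝓛 W⁻¹ S U` satisfies `π^L P^L = π^L`. -/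
theorem stationary_distribution_transform (n : ℕ) (hn : 1 ≤ n)
    (𝓛 L S : Matrix (Fin n) (Fin n) ℝ) (hS : IsUnit S) (hsim : 𝓛 * S = S * L)
    (lam : ℝ) (hlam : lam ≠ 0)
    (u : Fin n → ℝ) (hu : ∀ i, u i ≠ 0) (hLu : L.mulVec u = lam • u)
    (w : Fin n → ℝ) (hw : w = S.mulVec u) (hw0 : ∀ i, w i ≠ 0)
    (h𝓛w : 𝓛.mulVec w = lam • w)
    (U W PL P𝓛 : Matrix (Fin n) (Fin n) ℝ)
    (hU : U = Matrix.diagonal u) (hW : W = Matrix.diagonal w)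
    (hPL : PL = (1 / lam) • (U⁻¹ * L * U))
    (hP𝓛 : P𝓛 = (1 / lam) • (W⁻¹ * 𝓛 * W))
    (π𝓛 : Fin n → ℝ) (hπ𝓛 : Matrix.vecMul π𝓛 P𝓛 = π𝓛) :
    Matrix.vecMul (Matrix.vecMul π𝓛 (W⁻¹ * S * U)) PL =
      Matrix.vecMul π𝓛 (W⁻¹ * S * U) := by
  have hUdet : U.det ≠ 0 := by
    rw [hU, Matrix.det_diagonal]
    exact Finset.prod_ne_zero_iff.2 fun i _ => hu i
  have hWdet : W.det ≠ 0 := by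
    rw [hW, Matrix.det_diagonal]
    exact Finset.prod_ne_zero_iff.2 fun i _ => hw0 i
  have hUU : U * U⁻¹ = 1 := Matrix.mul_nonsing_inv U hUdet.isUnit
  have hWW : W * W⁻¹ = 1 := Matrix.mul_nonsing_inv W hWdet.isUnit
  have key : (W⁻¹ * S * U) * PL = P𝓛 * (W⁻¹ * S * U) := by
    rw [hPL, hP𝓛, Matrix.mul_smul, Matrix.smul_mul]
    congr 1
    calc W⁻¹ * S * U * (U⁻¹ * L * U)
        = W⁻¹ * (S * (U * U⁻¹) * L) * U := by noncomm_ring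
      _ = W⁻¹ * (𝓛 * S) * U := by rw [hUU, Matrix.mul_one, hsim]
      _ = W⁻¹ * 𝓛 * (W * W⁻¹) * (S * U) := by rw [hWW]; noncomm_ring
      _ = W⁻¹ * 𝓛 * W * (W⁻¹ * S * U) := by noncomm_ring
  rw [Matrix.vecMul_vecMul, key, ← Matrix.vecMul_vecMul,
    hπ𝓛]
end

section
/- The Kolmogorov–Sinai entropy of the associated Markov chains is not a similarity invariant: for the similar 2×2 matrices 𝓛 = [[1, 3], [2/5, 11/20]] and L = [[31/20, 13/8], [2/5, 0]], the entropies H_𝓛 = −Σ_{i,j} π_i^𝓛 p_{ij}^𝓛 log p_{ij}^𝓛 and H_L = −Σ_{i,j} π_i^L p_{ij}^L log p_{ij}^L of their associated Markov matrices are different (H_𝓛 ≈ 0.656 ≠ H_L ≈ 0.401). -/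
open Matrix

set_option maxHeartbeats 2000000 in
/-- The Kolmogorov–Sinai entropy of the associated Markov chains is not a
similarity invariant: the similar matrices `𝓛 = [[1, 3], [2/5, 11/20]]` and
`L = [[31/20, 13/8], [2/5, 0]]`, with common dominant eigenvalue
`λ = (31 + √2001)/40`, have associated Markov chains with different entropies. -/
theorem entropy_not_similarity_invariant
    (lam : ℝ) (hlam : lam = (31 + Real.sqrt 2001) / 40)
    (𝓛 L : Matrix (Fin 2) (Fin 2) ℝ)
    (h𝓛 : 𝓛 = !![1, 3; 2/5, 11/20]) (hL : L = !![31/20, 13/8; 2/5, 0])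
    -- positive right eigenvectors for the common dominant eigenvalue
    (u w : Fin 2 → ℝ) (hu : ∀ i, 0 < u i) (hw : ∀ i, 0 < w i)
    (hLu : L.mulVec u = lam • u) (h𝓛w : 𝓛.mulVec w = lam • w)
    -- the associated Markov matrices
    (PL P𝓛 : Matrix (Fin 2) (Fin 2) ℝ)
    (hPL : ∀ i j, PL i j = L i j * u j / (lam * u i))
    (hP𝓛 : ∀ i j, P𝓛 i j = 𝓛 i j * w j / (lam * w i))
    -- their stationary distributions
    (πL π𝓛 : Fin 2 → ℝ)
    (hπL : Matrix.vecMul πL PL = πL) (hπLpos : ∀ i, 0 ≤ πL i) (hπLsum : ∑ i, πL i = 1)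
    (hπ𝓛 : Matrix.vecMul π𝓛 P𝓛 = π𝓛) (hπ𝓛pos : ∀ i, 0 ≤ π𝓛 i) (hπ𝓛sum : ∑ i, π𝓛 i = 1) :
    -(∑ i, ∑ j, π𝓛 i * P𝓛 i j * Real.log (P𝓛 i j)) ≠
      -(∑ i, ∑ j, πL i * PL i j * Real.log (PL i j)) := by
  -- bounds on sqrt 2001 and lam
  have hs2 : Real.sqrt 2001 ^ 2 = 2001 := Real.sq_sqrt (by norm_num)
  have hs0 : (0:ℝ) < Real.sqrt 2001 := Real.sqrt_pos.mpr (by norm_num)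
  have hslo : (44.73:ℝ) < Real.sqrt 2001 := by nlinarith
  have hshi : Real.sqrt 2001 < 44.74 := by nlinarith
  have hlamlo : (1.89325:ℝ) < lam := by rw [hlam]; linarith
  have hlamhi : lam < 1.8935 := by rw [hlam]; linarith
  have hlam0 : (0:ℝ) < lam := by linarith
  have hlamne : lam ≠ 0 := ne_of_gt hlam0
  have hu0 := hu 0
  have hu1 := hu 1
  have hw0 := hw 0
  have hw1 := hw 1
  -- eigen equations
  have hue1 : (2/5) * u 0 = lam * u 1 := by
    have h := congrFun hLu 1
    simp [hL, Matrix.mulVec, dotProduct, Fin.sum_univ_two] at h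
    linarith
  have hue0 : (31/20) * u 0 + (13/8) * u 1 = lam * u 0 := by
    have h := congrFun hLu 0
    simp [hL, Matrix.mulVec, dotProduct, Fin.sum_univ_two] at h
    linarith
  have hwe0 : w 0 + 3 * w 1 = lam * w 0 := by
    have h := congrFun h𝓛w 0
    simp [h𝓛, Matrix.mulVec, dotProduct, Fin.sum_univ_two] at h
    linarith
  have hwe1 : (2/5) * w 0 + (11/20) * w 1 = lam * w 1 := by
    have h := congrFun h𝓛w 1
    simp [h𝓛, Matrix.mulVec, dotProduct, Fin.sum_univ_two] at h
    linarith
  -- entries of PL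
  have hPL00 : PL 0 0 = 31/(20*lam) := by
    rw [hPL 0 0, hL]
    norm_num
    field_simp
  have hPL01 : PL 0 1 = 1 - 31/(20*lam) := by
    rw [hPL 0 1, hL]
    norm_num
    rw [div_eq_iff (by positivity)]
    field_simp
    linear_combination 160 * hue0
  have hPL10 : PL 1 0 = 1 := by
    rw [hPL 1 0, hL]
    norm_num
    rw [div_eq_one_iff_eq (by positivity)]
    linarith [hue1]
  have hPL11 : PL 1 1 = 0 := by
    rw [hPL 1 1, hL]
    norm_num
  -- entries of P𝓛
  have hQ00 : P𝓛 0 0 = 1/lam := by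
    rw [hP𝓛 0 0, h𝓛]
    norm_num
    field_simp
  have hQ01 : P𝓛 0 1 = 1 - 1/lam := by
    rw [hP𝓛 0 1, h𝓛]
    norm_num
    rw [div_eq_iff (by positivity)]
    field_simp
    linear_combination hwe0
  have hQ10 : P𝓛 1 0 = 1 - 11/(20*lam) := by
    rw [hP𝓛 1 0, h𝓛]
    norm_num
    rw [div_eq_iff (by positivity)]
    field_simp
    linear_combination 100 * hwe1
  have hQ11 : P𝓛 1 1 = 11/(20*lam) := by
    rw [hP𝓛 1 1, h𝓛]
    norm_num
    field_simp
  -- numeric bounds on entries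
  have hA1 : (0.81858:ℝ) ≤ 31/(20*lam) := by
    rw [le_div_iff₀ (by linarith)]; linarith
  have hA2 : (31:ℝ)/(20*lam) ≤ 0.81870 := by
    rw [div_le_iff₀ (by linarith)]; linarith
  have hB1 : (0.52812:ℝ) ≤ 1/lam := by
    rw [le_div_iff₀ (by linarith)]; linarith
  have hB2 : (1:ℝ)/lam ≤ 0.52820 := by
    rw [div_le_iff₀ (by linarith)]; linarith
  have hC1 : (0.29046:ℝ) ≤ 11/(20*lam) := by
    rw [le_div_iff₀ (by linarith)]; linarith
  have hC2 : (11:ℝ)/(20*lam) ≤ 0.29051 := by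
    rw [div_le_iff₀ (by linarith)]; linarith
  -- the basic logarithm lower bound
  have key : ∀ x : ℝ, 0 < x → 1 - 1/x ≤ Real.log x := by
    intro x hx
    have h := Real.log_le_sub_one_of_pos (x := x⁻¹) (by positivity)
    rw [Real.log_inv] at h
    rw [one_div]
    linarith
  have hlog2lt := Real.log_two_lt_d9
  have hlog2gt := Real.log_two_gt_d9
  -- bounds on log A and log (1-A)
  have hApos : (0:ℝ) < 31/(20*lam) := by positivity
  have h1Apos : (0:ℝ) < 1 - 31/(20*lam) := by linarith
  have hlA_lb : (-0.22162:ℝ) ≤ Real.log (31/(20*lam)) := by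
    have k := key _ hApos
    rw [one_div_div] at k
    have h20 : 20*lam/31 ≤ 1.22162 := by rw [div_le_iff₀ (by norm_num)]; linarith
    linarith
  have hlA_ub : Real.log (31/(20*lam)) ≤ 0 := Real.log_nonpos (by positivity) (by linarith)
  have hl2_lb : (-1.76524:ℝ) ≤ Real.log (1 - 31/(20*lam)) := by
    have hm : Real.log (4*(1 - 31/(20*lam)))
        = Real.log 4 + Real.log (1 - 31/(20*lam)) :=
      Real.log_mul (by norm_num) (ne_of_gt h1Apos)
    have h4 : Real.log 4 = 2 * Real.log 2 := by
      rw [show (4:ℝ) = 2*2 by norm_num, Real.log_mul two_ne_zero two_ne_zero]; ring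
    have k := key (4*(1 - 31/(20*lam))) (by linarith)
    have hinv : 1/(4*(1 - 31/(20*lam))) ≤ 1.37894 := by
      rw [div_le_iff₀ (by linarith)]; linarith [hA2]
    rw [hm, h4] at k
    linarith
  have hl2_ub : Real.log (1 - 31/(20*lam)) ≤ 0 := Real.log_nonpos (by linarith) (by linarith)
  -- upper bounds on the logs appearing in H_𝓛
  have hBpos : (0:ℝ) < 1/lam := by positivity
  have h1Bpos : (0:ℝ) < 1 - 1/lam := by linarith
  have hCpos : (0:ℝ) < 11/(20*lam) := by positivity
  have h1Cpos : (0:ℝ) < 1 - 11/(20*lam) := by linarith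
  have hlB_ub : Real.log (1/lam) ≤ -0.63674 := by
    have hm : Real.log (2*(1/lam)) = Real.log 2 + Real.log (1/lam) :=
      Real.log_mul two_ne_zero (by positivity)
    have hk := Real.log_le_sub_one_of_pos (x := 2*(1/lam)) (by positivity)
    linarith
  have hl1B_ub : Real.log (1 - 1/lam) ≤ -0.74938 := by
    have hm : Real.log (2*(1 - 1/lam)) = Real.log 2 + Real.log (1 - 1/lam) :=
      Real.log_mul two_ne_zero (ne_of_gt h1Bpos)
    have hk := Real.log_le_sub_one_of_pos (x := 2*(1 - 1/lam)) (by linarith)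
    linarith
  have hlC_ub : Real.log (11/(20*lam)) ≤ -1.11212 := by
    have hm : Real.log (2*(11/(20*lam))) = Real.log 2 + Real.log (11/(20*lam)) :=
      Real.log_mul two_ne_zero (ne_of_gt hCpos)
    have hk := Real.log_le_sub_one_of_pos (x := 2*(11/(20*lam))) (by positivity)
    linarith
  have hl1C_ub : Real.log (1 - 11/(20*lam)) ≤ -0.29046 := by
    have hk := Real.log_le_sub_one_of_pos (x := 1 - 11/(20*lam)) h1Cpos
    linarith
  -- row entropy bounds
  have p1 : (31/(20*lam)) * (-Real.log (31/(20*lam))) ≤ 0.81870 * 0.22162 :=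
    mul_le_mul hA2 (by linarith) (by linarith) (by norm_num)
  have p2 : (1 - 31/(20*lam)) * (-Real.log (1 - 31/(20*lam))) ≤ 0.18142 * 1.76524 :=
    mul_le_mul (by linarith) (by linarith) (by linarith) (by norm_num)
  have hrowL : (-0.50176:ℝ) ≤ (31/(20*lam)) * Real.log (31/(20*lam))
      + (1 - 31/(20*lam)) * Real.log (1 - 31/(20*lam)) := by linarith [p1, p2]
  have q1 : (0.52812:ℝ) * 0.63674 ≤ (1/lam) * (-Real.log (1/lam)) :=
    mul_le_mul hB1 (by linarith) (by norm_num) (by linarith)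
  have q2 : (0.47180:ℝ) * 0.74938 ≤ (1 - 1/lam) * (-Real.log (1 - 1/lam)) :=
    mul_le_mul (by linarith) (by linarith) (by norm_num) (by linarith)
  have q3 : (0.70949:ℝ) * 0.29046 ≤ (1 - 11/(20*lam)) * (-Real.log (1 - 11/(20*lam))) :=
    mul_le_mul (by linarith) (by linarith) (by norm_num) (by linarith)
  have q4 : (0.29046:ℝ) * 1.11212 ≤ (11/(20*lam)) * (-Real.log (11/(20*lam))) :=
    mul_le_mul (by linarith) (by linarith) (by norm_num) (by linarith)
  have hrowB : (1/lam) * Real.log (1/lam) + (1 - 1/lam) * Real.log (1 - 1/lam)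
      ≤ -0.52 := by linarith [q1, q2]
  have hrowC : (1 - 11/(20*lam)) * Real.log (1 - 11/(20*lam))
      + (11/(20*lam)) * Real.log (11/(20*lam)) ≤ -0.52 := by linarith [q3, q4]
  -- stationary distribution of PL
  have hsumL : πL 0 + πL 1 = 1 := by
    have := hπLsum; rwa [Fin.sum_univ_two] at this
  have hstL : πL 0 * (1 - 31/(20*lam)) = πL 1 := by
    have h := congrFun hπL 1
    simp [Matrix.vecMul, dotProduct, Fin.sum_univ_two, hPL01, hPL11] at h
    linarith
  have hπ0ub : πL 0 ≤ 0.84653 := by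
    linarith [hstL, hsumL, hπLpos 0, mul_le_mul_of_nonneg_left hA2 (hπLpos 0)]
  have hsumQ : π𝓛 0 + π𝓛 1 = 1 := by
    have := hπ𝓛sum; rwa [Fin.sum_univ_two] at this
  -- rewrite the sums
  have S1 : (∑ i, ∑ j, π𝓛 i * P𝓛 i j * Real.log (P𝓛 i j))
      = π𝓛 0 * (1/lam) * Real.log (1/lam)
        + π𝓛 0 * (1 - 1/lam) * Real.log (1 - 1/lam)
        + (π𝓛 1 * (1 - 11/(20*lam)) * Real.log (1 - 11/(20*lam))
          + π𝓛 1 * (11/(20*lam)) * Real.log (11/(20*lam))) := by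
    simp [Fin.sum_univ_two, hQ00, hQ01, hQ10, hQ11]
  have S2 : (∑ i, ∑ j, πL i * PL i j * Real.log (PL i j))
      = πL 0 * (31/(20*lam)) * Real.log (31/(20*lam))
        + πL 0 * (1 - 31/(20*lam)) * Real.log (1 - 31/(20*lam)) := by
    simp [Fin.sum_univ_two, hPL00, hPL01, hPL10, hPL11, Real.log_one]
  have E𝓛 : (0.52:ℝ) ≤ -(π𝓛 0 * (1/lam) * Real.log (1/lam)
        + π𝓛 0 * (1 - 1/lam) * Real.log (1 - 1/lam)
        + (π𝓛 1 * (1 - 11/(20*lam)) * Real.log (1 - 11/(20*lam))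
          + π𝓛 1 * (11/(20*lam)) * Real.log (11/(20*lam)))) := by
    linarith [mul_le_mul_of_nonneg_left hrowB (hπ𝓛pos 0),
      mul_le_mul_of_nonneg_left hrowC (hπ𝓛pos 1), hsumQ]
  have EL : -(πL 0 * (31/(20*lam)) * Real.log (31/(20*lam))
        + πL 0 * (1 - 31/(20*lam)) * Real.log (1 - 31/(20*lam))) ≤ 0.43 := by
    linarith [mul_le_mul_of_nonneg_left hrowL (hπLpos 0), hπ0ub, hπLpos 0]
  rw [S1, S2]
  intro h
  linarith [E𝓛, EL]
end

section
/- Under the similarity S⁻¹𝓛S = L of the main theorem, the characteristic polynomial of the Lefkovitch matrix 𝓛 equals that of the pseudo-Leslie matrix L, which is λⁿ − Σ_{j=1}^{n} φ_j Λ_1^{j-1} λ^{n-j} where Λ_1^{j-1} = b_1···b_{j-1}. -/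
open Finset Matrix

section Aux

open Polynomial

variable {R : Type*} [CommRing R]

/-- Helper shape: first row `r`, subdiagonal `a`, diagonal `d` (rows ≥ 1), zero else. -/
def Hm (n : ℕ) (r a d : ℕ → R) : Matrix (Fin n) (Fin n) R := fun i j =>
  if i.val = 0 then r j.val
  else if i.val = j.val + 1 then a i.val
  else if i.val = j.val then d i.val else 0

lemma prod_Icc_shift (m l : ℕ) (g : ℕ → R) :
    ∏ k ∈ Icc (m + 1) (l + 1), g k = ∏ k ∈ Icc m l, g (k + 1) := by
  rw [← Finset.map_add_right_Icc m l 1, Finset.prod_map]; rfl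

lemma prod_Icc_one (m : ℕ) (g : ℕ → R) :
    ∏ k ∈ Icc 1 m, g k = ∏ k ∈ range m, g (k + 1) := by
  rw [← Finset.Ico_add_one_right_eq_Icc, Finset.prod_Ico_eq_prod_range]
  simp [add_comm]

lemma sum_Icc_one {M : Type*} [AddCommMonoid M] (m : ℕ) (g : ℕ → M) :
    ∑ k ∈ Icc 1 m, g k = ∑ k ∈ range m, g (k + 1) := by
  rw [← Finset.Ico_add_one_right_eq_Icc, Finset.sum_Ico_eq_sum_range]
  simp [add_comm]

lemma triangle {M : Type*} [AddCommMonoid M] (n : ℕ) (F : ℕ → ℕ → M) :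
    ∑ j ∈ range n, ∑ p ∈ range (n - j), F j p
      = ∑ J ∈ range n, ∑ k ∈ range (J + 1), F k (J - k) := by
  induction n with
  | zero => simp
  | succ n ih =>
    have hL : ∀ j ∈ range (n+1),
        ∑ p ∈ range (n+1-j), F j p = ∑ p ∈ range (n-j), F j p + F j (n-j) := by
      intro j hj
      rw [Finset.mem_range] at hj
      have h : n+1-j = (n-j)+1 := by omega
      rw [h, Finset.sum_range_succ]
    rw [Finset.sum_congr rfl hL, Finset.sum_add_distrib,
      Finset.sum_range_succ (fun j => ∑ p ∈ range (n-j), F j p) n]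
    simp only [Nat.sub_self, Finset.range_zero, Finset.sum_empty, add_zero]
    rw [ih]
    conv_rhs => rw [Finset.sum_range_succ]

lemma det_Hm (n : ℕ) (r a d : ℕ → R) :
    (Hm (n + 1) r a d).det =
      ∑ j ∈ range (n + 1), (-1 : R) ^ j * r j * (∏ k ∈ Icc 1 j, a k) *
        ∏ k ∈ Icc (j + 1) n, d k := by
  induction n generalizing r a d with
  | zero => simp [Hm, Matrix.det_fin_one]
  | succ n ih =>
    rw [Matrix.det_succ_column_zero, Fin.sum_univ_succ, Fin.sum_univ_succ]
    have hrest : ∀ i : Fin n,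
        (-1 : R) ^ ((i.succ.succ : Fin (n+2)) : ℕ) * Hm (n+2) r a d i.succ.succ 0 *
          ((Hm (n+2) r a d).submatrix i.succ.succ.succAbove Fin.succ).det = 0 := by
      intro i
      have : Hm (n+2) r a d i.succ.succ 0 = 0 := by
        simp only [Hm, Fin.val_succ, Fin.val_zero]
        split_ifs <;> first | rfl | (exact ‹False›.elim) | (exfalso; omega)
      simp [this]
    rw [Finset.sum_congr rfl (fun i _ => hrest i)]
    simp only [Finset.sum_const_zero, add_zero]
    have hA : ((Hm (n+2) r a d).submatrix (0 : Fin (n+2)).succAbove Fin.succ).det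
        = ∏ k ∈ Icc 1 (n + 1), d k := by
      rw [Fin.succAbove_zero, Matrix.det_of_lowerTriangular]
      · rw [prod_Icc_one, ← Fin.prod_univ_eq_prod_range (fun k => d (k + 1)) (n+1)]
        apply Finset.prod_congr rfl
        intro i _
        simp only [Matrix.submatrix_apply, Hm, Fin.val_succ]
        split_ifs <;> first | rfl | (exact ‹False›.elim) | (exfalso; omega)
      · intro i j hij
        have hij' : (i : ℕ) < (j : ℕ) := hij
        simp only [Matrix.submatrix_apply, Hm, Fin.val_succ]
        split_ifs <;> first | rfl | (exact ‹False›.elim) | (exfalso; omega)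
    have hB : (Hm (n+2) r a d).submatrix ((1 : Fin (n+2)).succAbove) Fin.succ
        = Hm (n+1) (fun j => r (j+1)) (fun k => a (k+1)) (fun k => d (k+1)) := by
      ext l m
      simp only [Matrix.submatrix_apply]
      refine Fin.cases ?_ ?_ l
      · have h01 : (1 : Fin (n+2)).succAbove 0 = 0 := rfl
        rw [h01]
        simp [Hm]
      · intro l'
        have hsa : (1 : Fin (n+2)).succAbove l'.succ = l'.succ.succ :=
          Fin.succAbove_of_le_castSucc _ _ (by simp [Fin.le_def])
        rw [hsa]
        simp only [Hm, Fin.val_succ]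
        split_ifs <;> first | rfl | (exact ‹False›.elim) | (exfalso; omega)
    simp only [Fin.succ_zero_eq_one, Fin.val_zero, Fin.val_one] at *
    rw [hA, hB, ih]
    have hH1 : Hm (n+2) r a d 0 0 = r 0 := rfl
    have hH2 : Hm (n+2) r a d 1 0 = a 1 := rfl
    rw [hH1, hH2]
    rw [Finset.mul_sum]
    conv_rhs => rw [Finset.sum_range_succ', add_comm]
    congr 1
    · simp
    · apply Finset.sum_congr rfl
      intro j hj
      have e1 : ∏ k ∈ Icc 1 (j+1), a k = a 1 * ∏ k ∈ Icc 1 j, a (k + 1) := by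
        rw [← prod_Icc_shift, ← Finset.Ioc_insert_left (Nat.one_le_iff_ne_zero.mpr (by omega)),
          Finset.prod_insert (by simp), Finset.Icc_add_one_left_eq_Ioc]
      have e2 : ∏ k ∈ Icc (j+1+1) (n+1), d k = ∏ k ∈ Icc (j+1) n, d (k + 1) := by
        rw [← prod_Icc_shift]
      rw [e1, e2]
      ring

lemma vieta (S : Finset ℕ) (c : ℕ → ℝ) :
    ∏ k ∈ S, (X - C (c k)) =
      ∑ p ∈ range (#S + 1),
        C ((-1 : ℝ) ^ p * ∑ s ∈ S.powersetCard p, ∏ k ∈ s, c k) * X ^ (#S - p) := by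
  have h := Multiset.prod_X_sub_X_eq_sum_esymm (S.val.map c)
  rw [Multiset.map_map] at h
  have hL : ∏ k ∈ S, (X - C (c k)) = (Multiset.map ((fun t => X - C t) ∘ c) S.val).prod := rfl
  rw [hL, h, Multiset.card_map]
  apply Finset.sum_congr rfl
  intro p _
  rw [Finset.esymm_map_val]
  rw [_root_.map_mul, map_pow, map_neg, Polynomial.C_1, Finset.card_def]
  ring

end Aux

section Aux2

open Polynomial

lemma Gam_zero (n : ℕ) (c : ℕ → ℝ) (i : ℕ) : Gam n c i 0 = 1 := by
  simp [Gam]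

lemma Gam_top (n : ℕ) (c : ℕ → ℝ) (hn : 1 ≤ n) : Gam n c 1 n = 0 := by
  have h : #(Finset.Icc 1 (n-1)) < n := by rw [Nat.card_Icc]; omega
  rw [Gam, Finset.powersetCard_eq_empty.mpr h]
  simp

lemma Lam_split (b : ℕ → ℝ) (k j : ℕ) (hk : 1 ≤ k) (hkj : k ≤ j + 1) :
    Lam b 1 j = Lam b 1 (k - 1) * Lam b k j := by
  rw [Lam, Lam, Lam, ← Finset.prod_union]
  · congr 1
    ext x
    simp only [Finset.mem_union, Finset.mem_Icc]
    omega
  · rw [Finset.disjoint_left]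
    intro x hx hx'
    simp only [Finset.mem_Icc] at hx hx'
    omega

lemma Qexp (n : ℕ) (c : ℕ → ℝ) (m : ℕ) (hm : 1 ≤ m) (hmn : m ≤ n) (hn : 1 ≤ n) :
    ∏ k ∈ Finset.Icc m (n-1), (X - C (c k))
      = ∑ p ∈ range (n - m + 1), C (Gam n c m p) * X ^ (n - m - p) := by
  have hcard : #(Finset.Icc m (n-1)) = n - m := by rw [Nat.card_Icc]; omega
  rw [vieta, hcard]
  rfl

lemma charmatrix_Lef (n : ℕ) (f c b : ℕ → ℝ) :
    (Lef n f c b).charmatrix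
      = Hm n (fun j => (if j = 0 then X else 0) - C (f (j+1)))
          (fun i => - C (b i)) (fun i => X - C (c i)) := by
  ext i j
  by_cases h : i = j
  · subst h
    rw [charmatrix_apply_eq]
    simp only [Lef, Hm]
    split_ifs <;> first | rfl | (exact ‹False›.elim) | (exfalso; omega) | simp_all
  · rw [charmatrix_apply_ne _ _ _ h]
    have hv : (i : ℕ) ≠ (j : ℕ) := fun hc => h (Fin.ext hc)
    simp only [Lef, Hm]
    split_ifs <;> first | rfl | (exact ‹False›.elim) | (exfalso; omega) | simp_all

lemma charmatrix_PLes (n : ℕ) (φ b : ℕ → ℝ) :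
    (PLes n φ b).charmatrix
      = Hm n (fun j => (if j = 0 then X else 0) - C (φ (j+1)))
          (fun i => - C (b i)) (fun i => X) := by
  ext i j
  by_cases h : i = j
  · subst h
    rw [charmatrix_apply_eq]
    simp only [PLes, Hm]
    split_ifs <;> first | rfl | (exact ‹False›.elim) | (exfalso; omega) | simp_all
  · rw [charmatrix_apply_ne _ _ _ h]
    have hv : (i : ℕ) ≠ (j : ℕ) := fun hc => h (Fin.ext hc)
    simp only [PLes, Hm]
    split_ifs <;> first | rfl | (exact ‹False›.elim) | (exfalso; omega) | simp_all

lemma prod_neg_C (b : ℕ → ℝ) (j : ℕ) :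
    ∏ k ∈ Finset.Icc 1 j, (-C (b k)) = (-1 : ℝ[X]) ^ j * C (Lam b 1 j) := by
  calc ∏ k ∈ Finset.Icc 1 j, (-C (b k)) = ∏ k ∈ Finset.Icc 1 j, ((-1) * C (b k)) := by
        simp
    _ = (-1 : ℝ[X]) ^ j * C (Lam b 1 j) := by
        rw [Finset.prod_mul_distrib, Finset.prod_const, Nat.card_Icc, Lam, map_prod]
        simp

end Aux2

open Polynomial in
/-- The Lefkovitch matrix and the similar pseudo-Leslie matrix share the
characteristic polynomial `λⁿ − ∑_{j=1}^n φ_j Λ_1^{j-1} λ^{n-j}`. -/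
theorem lefkovitch_charpoly (n : ℕ) (hn : 1 ≤ n) (f c b : ℕ → ℝ)
    (hb : ∀ k, 1 ≤ k → k ≤ n - 1 → 0 < b k) :
    (Lef n f c b).charpoly = (PLes n (phi n f c b) b).charpoly ∧
      (PLes n (phi n f c b) b).charpoly =
        X ^ n - ∑ j ∈ Finset.Icc 1 n, C (phi n f c b j * Lam b 1 (j - 1)) * X ^ (n - j) := by
  obtain ⟨N, rfl⟩ : ∃ N, n = N + 1 := ⟨n - 1, by omega⟩
  clear hn
  have hbne : ∀ k, 1 ≤ k → k ≤ N → b k ≠ 0 := fun k h1 h2 => (hb k h1 (by omega)).ne'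
  have hLamne : ∀ i j, 1 ≤ i → j ≤ N → Lam b i j ≠ 0 := by
    intro i j h1 h2
    rw [Lam]
    refine Finset.prod_ne_zero_iff.mpr fun k hk => ?_
    rw [Finset.mem_Icc] at hk
    exact hbne k (by omega) (by omega)
  have hsq : ∀ j : ℕ, (-1 : ℝ[X]) ^ j * (-1 : ℝ[X]) ^ j = 1 := by
    intro j; rw [← mul_pow]; norm_num
  -- the Q-expansions
  have hQ : ∀ j, j ≤ N → ∏ k ∈ Finset.Icc (j+1) N, (X - C (c k))
      = ∑ p ∈ range (N - j + 1), C (Gam (N+1) c (j+1) p) * X ^ (N - j - p) := by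
    intro j hj
    have h := Qexp (N+1) c (j+1) (by omega) (by omega) (by omega)
    rw [show N + 1 - 1 = N from rfl, show N + 1 - (j+1) = N - j from by omega] at h
    exact h
  -- generic splitting of the leading `X` term
  have hsplit : ∀ (g : ℕ → ℝ) (Q : ℕ → ℝ[X]),
      ∑ j ∈ range (N+1), ((if j = 0 then X else 0) - C (g (j+1))) * C (Lam b 1 j) * Q j
        = X * Q 0 - ∑ j ∈ range (N+1), C (g (j+1) * Lam b 1 j) * Q j := by
    intro g Q
    have h1 : ∀ j ∈ range (N+1), ((if j = 0 then X else 0) - C (g (j+1))) * C (Lam b 1 j) * Q j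
        = (if j = 0 then X * C (Lam b 1 j) * Q j else 0) - C (g (j+1) * Lam b 1 j) * Q j := by
      intro j _
      split_ifs with h <;> rw [C_mul] <;> ring
    rw [Finset.sum_congr rfl h1, Finset.sum_sub_distrib, Finset.sum_ite_eq' (range (N+1)) 0
      (fun j => X * C (Lam b 1 j) * Q j)]
    simp [Lam]
  -- charpoly of the pseudo-Leslie matrix
  have hPL : (PLes (N+1) (phi (N+1) f c b) b).charpoly
      = X ^ (N+1) - ∑ j ∈ range (N+1),
          C (phi (N+1) f c b (j+1) * Lam b 1 j) * X ^ (N - j) := by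
    have h0 : (PLes (N+1) (phi (N+1) f c b) b).charpoly
        = ((PLes (N+1) (phi (N+1) f c b) b).charmatrix).det := rfl
    rw [h0, charmatrix_PLes, det_Hm]
    have h1 : ∀ j ∈ range (N+1),
        (-1 : ℝ[X])^j * ((if j = 0 then X else 0) - C (phi (N+1) f c b (j+1)))
          * (∏ k ∈ Finset.Icc 1 j, -C (b k)) * ∏ k ∈ Finset.Icc (j+1) N, X
        = ((if j = 0 then X else 0) - C (phi (N+1) f c b (j+1))) * C (Lam b 1 j) * X ^ (N - j) := by
      intro j hj
      rw [Finset.mem_range] at hj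
      rw [prod_neg_C, Finset.prod_const, Nat.card_Icc, show N + 1 - (j+1) = N - j from by omega]
      calc (-1:ℝ[X])^j * ((if j = 0 then X else 0) - C (phi (N+1) f c b (j+1)))
            * ((-1:ℝ[X])^j * C (Lam b 1 j)) * X ^ (N-j)
          = ((-1:ℝ[X])^j * (-1:ℝ[X])^j) * (((if j = 0 then X else 0)
              - C (phi (N+1) f c b (j+1))) * C (Lam b 1 j) * X ^ (N-j)) := by ring
        _ = _ := by rw [hsq, one_mul]
    rw [Finset.sum_congr rfl h1, hsplit]
    rw [show X * X ^ (N - 0) = X ^ (N+1) from by rw [Nat.sub_zero, ← pow_succ']]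
  -- charpoly of the Lefkovitch matrix
  have hLf0 : (Lef (N+1) f c b).charpoly
      = X * (∏ k ∈ Finset.Icc 1 N, (X - C (c k)))
        - ∑ j ∈ range (N+1), C (f (j+1) * Lam b 1 j) * ∏ k ∈ Finset.Icc (j+1) N, (X - C (c k)) := by
    have h0 : (Lef (N+1) f c b).charpoly = ((Lef (N+1) f c b).charmatrix).det := rfl
    rw [h0, charmatrix_Lef, det_Hm]
    have h1 : ∀ j ∈ range (N+1),
        (-1 : ℝ[X])^j * ((if j = 0 then X else 0) - C (f (j+1)))
          * (∏ k ∈ Finset.Icc 1 j, -C (b k)) * ∏ k ∈ Finset.Icc (j+1) N, (X - C (c k))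
        = ((if j = 0 then X else 0) - C (f (j+1))) * C (Lam b 1 j)
            * ∏ k ∈ Finset.Icc (j+1) N, (X - C (c k)) := by
      intro j hj
      rw [prod_neg_C]
      calc (-1:ℝ[X])^j * ((if j = 0 then X else 0) - C (f (j+1)))
            * ((-1:ℝ[X])^j * C (Lam b 1 j)) * ∏ k ∈ Finset.Icc (j+1) N, (X - C (c k))
          = ((-1:ℝ[X])^j * (-1:ℝ[X])^j) * (((if j = 0 then X else 0) - C (f (j+1)))
              * C (Lam b 1 j) * ∏ k ∈ Finset.Icc (j+1) N, (X - C (c k))) := by ring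
        _ = _ := by rw [hsq, one_mul]
    rw [Finset.sum_congr rfl h1, hsplit]
  -- Claim 1 : the leading product
  have claim1 : X * (∏ k ∈ Finset.Icc 1 N, (X - C (c k)))
      = X ^ (N+1) + ∑ j ∈ range (N+1), C (Gam (N+1) c 1 (j+1)) * X ^ (N - j) := by
    have hQ0 := hQ 0 (by omega)
    rw [show (0:ℕ)+1 = 1 from rfl, Nat.sub_zero] at hQ0
    rw [hQ0, Finset.mul_sum]
    have h1 : ∀ p ∈ range (N+1), X * (C (Gam (N+1) c 1 p) * X ^ (N - p))
        = C (Gam (N+1) c 1 p) * X ^ (N + 1 - p) := by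
      intro p hp
      rw [Finset.mem_range] at hp
      rw [show N + 1 - p = (N - p) + 1 from by omega, pow_succ]
      ring
    rw [Finset.sum_congr rfl h1,
      Finset.sum_range_succ' (fun p => C (Gam (N+1) c 1 p) * X ^ (N + 1 - p)) N,
      Gam_zero, C_1, one_mul, Nat.sub_zero,
      Finset.sum_range_succ (fun j => C (Gam (N+1) c 1 (j+1)) * X ^ (N - j)) N,
      Gam_top (N+1) c (by omega), C_0, zero_mul, add_zero, add_comm]
    congr 1
    apply Finset.sum_congr rfl
    intro p hp
    rw [Finset.mem_range] at hp
    rw [show N + 1 - (p+1) = N - p from by omega]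
  -- Claim 2 : the triangle reindexing
  have claim2 : ∑ j ∈ range (N+1), C (f (j+1) * Lam b 1 j) * ∏ k ∈ Finset.Icc (j+1) N, (X - C (c k))
      = ∑ J ∈ range (N+1),
          C (∑ k ∈ Finset.Icc 1 (J+1), Gam (N+1) c k (J+1-k) * Lam b 1 (k-1) * f k) * X ^ (N - J) := by
    have step1 : ∀ j ∈ range (N+1), C (f (j+1) * Lam b 1 j) * ∏ k ∈ Finset.Icc (j+1) N, (X - C (c k))
        = ∑ p ∈ range (N + 1 - j), C (f (j+1) * Lam b 1 j * Gam (N+1) c (j+1) p) * X ^ (N - j - p) := by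
      intro j hj
      rw [Finset.mem_range] at hj
      rw [hQ j (by omega), Finset.mul_sum, show N - j + 1 = N + 1 - j from by omega]
      apply Finset.sum_congr rfl
      intro p _
      simp only [C_mul]
      ring
    rw [Finset.sum_congr rfl step1,
      triangle (N+1) (fun j p => C (f (j+1) * Lam b 1 j * Gam (N+1) c (j+1) p) * X ^ (N - j - p))]
    apply Finset.sum_congr rfl
    intro J hJ
    rw [Finset.mem_range] at hJ
    rw [map_sum, Finset.sum_mul, sum_Icc_one]
    apply Finset.sum_congr rfl
    intro k hk
    rw [Finset.mem_range] at hk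
    rw [show N - k - (J - k) = N - J from by omega, show J + 1 - (k + 1) = J - k from by omega,
      show k + 1 - 1 = k from rfl]
    simp only [C_mul]
    ring
  -- φ_j Λ_1^{j-1} in closed form
  have hphiL : ∀ j ∈ range (N+1), phi (N+1) f c b (j+1) * Lam b 1 j
      = -(Gam (N+1) c 1 (j+1)) + ∑ k ∈ Finset.Icc 1 (j+1),
          Gam (N+1) c k (j+1-k) * Lam b 1 (k-1) * f k := by
    intro j hj
    rw [Finset.mem_range] at hj
    rw [phi, show j + 1 - 1 = j from rfl, add_mul, Finset.sum_mul]
    congr 1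
    · rw [neg_mul, div_mul_cancel₀]
      exact hLamne 1 j le_rfl (by omega)
    · apply Finset.sum_congr rfl
      intro k hk
      rw [Finset.mem_Icc] at hk
      have h1 : Lam b k j ≠ 0 := hLamne k j (by omega) (by omega)
      rw [Lam_split b k j (by omega) (by omega)]
      field_simp
  -- assemble
  have key : (Lef (N+1) f c b).charpoly = (PLes (N+1) (phi (N+1) f c b) b).charpoly := by
    rw [hLf0, hPL, claim1, claim2]
    have h2 : ∀ j ∈ range (N+1), C (phi (N+1) f c b (j+1) * Lam b 1 j) * X ^ (N - j)
        = -(C (Gam (N+1) c 1 (j+1)) * X ^ (N - j))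
          + C (∑ k ∈ Finset.Icc 1 (j+1), Gam (N+1) c k (j+1-k) * Lam b 1 (k-1) * f k) * X ^ (N - j) := by
      intro j hj
      rw [hphiL j hj, C_add, C_neg]
      ring
    rw [Finset.sum_congr rfl h2, Finset.sum_add_distrib, Finset.sum_neg_distrib]
    ring
  refine ⟨key, ?_⟩
  rw [hPL, sum_Icc_one]
  congr 1
  apply Finset.sum_congr rfl
  intro j hj
  rw [Finset.mem_range] at hj
  rw [show j + 1 - 1 = j from rfl, show N + 1 - (j+1) = N - j from by omega]
end
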